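/- (Lemma 3.4) Fix reals β ∈ (1,2), α ∈ (0,1), e_1, e_2 > 0 and set σ = 1 − α/2. For every ε > 0 there exists a positive integer N′ such that for every integer N with N > N′ + 1 there exist real (N−1)×(N−1) matrices Ũ and Ṽ with A_0 − P_sk = Ũ + Ṽ, rank(Ũ) ≤ 2·N′, and ‖Ṽ‖_2 ≤ ε. (Note that A_0 − P_sk = σ·(sk(K_N) − K_N) does not depend on h or τ.) -/

import Mathlib

set_option maxHeartbeats 1000000
set_option synthInstance.maxHeartbeats 400000


open scoped Matrix

/-- The coefficients `g_k^{(β)}`. -/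
noncomputable def gcoef (β : ℝ) : ℕ → ℝ
  | 0 => 1
  | k + 1 => (1 - (β + 1) / ((k : ℝ) + 1)) * gcoef β k

/-- The WSGD coefficients `ω_k^{(β)}`. -/
noncomputable def w (β : ℝ) : ℕ → ℝ
  | 0 => β / 2 * gcoef β 0
  | k + 1 => β / 2 * gcoef β (k + 1) + (2 - β) / 2 * gcoef β k
/-- The `(N−1) × (N−1)` lower Hessenberg Toeplitz matrix `G_β`
(1-based entry `(i,j)` equals `ω_{i−j+1}` when `i − j + 1 ≥ 0`, else `0`). -/
noncomputable def Gmat (β : ℝ) (N : ℕ) : Matrix (Fin (N - 1)) (Fin (N - 1)) ℝ :=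
  Matrix.of fun i j => if (j : ℕ) ≤ (i : ℕ) + 1 then w β ((i : ℕ) + 1 - (j : ℕ)) else 0

/-- `K_N = e₁·G_β + e₂·G_βᵀ`. -/
noncomputable def Kmat (β e1 e2 : ℝ) (N : ℕ) : Matrix (Fin (N - 1)) (Fin (N - 1)) ℝ :=
  e1 • Gmat β N + e2 • (Gmat β N)ᵀ
/-- `c_0^{(α,σ)} = τ^{−α}·σ^{1−α}/Γ(2−α)` with `σ = 1 − α/2`. -/
noncomputable def c0 (α τ : ℝ) : ℝ :=
  τ ^ (-α) * (1 - α / 2) ^ (1 - α) / Real.Gamma (2 - α)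

/-- `A_0 = h^β·c_0^{(α,σ)}·I − σ·K_N` with `σ = 1 − α/2`. -/
noncomputable def A0mat (β α h τ e1 e2 : ℝ) (N : ℕ) :
    Matrix (Fin (N - 1)) (Fin (N - 1)) ℝ :=
  (h ^ β * c0 α τ) • (1 : Matrix (Fin (N - 1)) (Fin (N - 1)) ℝ) -
    (1 - α / 2) • Kmat β e1 e2 N
/-- The skew-circulant matrix `sk(G_β)` with first column
`(ω_1, ω_2, …, ω_{N−2}, −ω_0)ᵀ`. -/
noncomputable def skG (β : ℝ) (N : ℕ) : Matrix (Fin (N - 1)) (Fin (N - 1)) ℝ :=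
  Matrix.of fun i j =>
    if (j : ℕ) ≤ (i : ℕ) then
      (if (i : ℕ) - (j : ℕ) = N - 2 then -(w β 0) else w β ((i : ℕ) - (j : ℕ) + 1))
    else
      -(if N - 1 - ((j : ℕ) - (i : ℕ)) = N - 2 then -(w β 0)
        else w β (N - 1 - ((j : ℕ) - (i : ℕ)) + 1))

/-- `sk(K_N) = e₁·sk(G_β) + e₂·sk(G_β)ᵀ`. -/
noncomputable def skK (β e1 e2 : ℝ) (N : ℕ) : Matrix (Fin (N - 1)) (Fin (N - 1)) ℝ :=
  e1 • skG β N + e2 • (skG β N)ᵀ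

/-- The skew-circulant preconditioner `P_sk = h^β·c_0^{(α,σ)}·I − σ·sk(K_N)`. -/
noncomputable def Psk (β α h τ e1 e2 : ℝ) (N : ℕ) :
    Matrix (Fin (N - 1)) (Fin (N - 1)) ℝ :=
  (h ^ β * c0 α τ) • (1 : Matrix (Fin (N - 1)) (Fin (N - 1)) ℝ) -
    (1 - α / 2) • skK β e1 e2 N
/-- The matrix operator norm induced by the Euclidean vector norm. -/
noncomputable def l2OpNorm {n : ℕ} (M : Matrix (Fin n) (Fin n) ℝ) : ℝ :=
  ‖Matrix.toEuclideanCLM (𝕜 := ℝ) M‖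
lemma gcoef_succ (β : ℝ) (k : ℕ) :
    gcoef β (k + 1) = (1 - (β + 1) / ((k : ℝ) + 1)) * gcoef β k := rfl

lemma gcoef_zero (β : ℝ) : gcoef β 0 = 1 := rfl

lemma gcoef_one (β : ℝ) : gcoef β 1 = -β := by
  rw [gcoef_succ, gcoef_zero]; norm_num

lemma g_nonneg {β : ℝ} (hβ1 : 1 < β) (hβ2 : β < 2) : ∀ k, 0 ≤ gcoef β (k + 2) := by
  intro k
  induction k with
  | zero =>
    have h2 : gcoef β 2 = (1 - (β + 1) / (1 + 1)) * gcoef β 1 := by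
      rw [gcoef_succ]; norm_num
    rw [h2, gcoef_one]
    nlinarith
  | succ n ih =>
    have h := gcoef_succ β (n + 2)
    have hcast : ((n + 2 : ℕ) : ℝ) + 1 = (n : ℝ) + 3 := by push_cast; ring
    rw [show n + 1 + 2 = (n + 2) + 1 by ring, h, hcast]
    have hfac : 0 ≤ 1 - (β + 1) / ((n : ℝ) + 3) := by
      have h1 : (β + 1) / ((n : ℝ) + 3) ≤ 1 := by
        rw [div_le_one (by positivity)]
        have : (0:ℝ) ≤ (n:ℝ) := Nat.cast_nonneg n
        linarith
      linarith
    exact mul_nonneg hfac ih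

lemma g_sum (β : ℝ) : ∀ n : ℕ, β * ∑ k ∈ Finset.range n, gcoef β k = -(n : ℝ) * gcoef β n := by
  intro n
  induction n with
  | zero => simp
  | succ n ih =>
    rw [Finset.sum_range_succ, mul_add, ih, gcoef_succ]
    have hn : ((n : ℝ) + 1) ≠ 0 := by positivity
    push_cast
    field_simp
    ring

lemma g_partial {β : ℝ} (hβ1 : 1 < β) (hβ2 : β < 2) (n : ℕ) :
    ∑ k ∈ Finset.range n, gcoef β (k + 2) ≤ β - 1 := by
  have h := g_sum β (n + 2)
  have h2 : ∑ k ∈ Finset.range (n + 2), gcoef β k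
      = (∑ k ∈ Finset.range n, gcoef β (k + 2)) + gcoef β 1 + gcoef β 0 := by
    rw [Finset.sum_range_succ', Finset.sum_range_succ']
  have hgn : 0 ≤ gcoef β (n + 2) := g_nonneg hβ1 hβ2 n
  rw [h2, gcoef_one, gcoef_zero] at h
  have hc : (0:ℝ) ≤ ((n : ℕ) : ℝ) + 2 := by positivity
  push_cast at h
  nlinarith

lemma w_abs_summable {β : ℝ} (hβ1 : 1 < β) (hβ2 : β < 2) :
    Summable (fun k => |w β k|) := by
  have hg2 : Summable (fun k => gcoef β (k + 2)) :=
    summable_of_sum_range_le (fun n => g_nonneg hβ1 hβ2 n) (fun n => g_partial hβ1 hβ2 n)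
  have hg : Summable (fun k => |gcoef β k|) := by
    have h1 : Summable (fun k => |gcoef β (k + 2)|) :=
      hg2.congr fun k => (abs_of_nonneg (g_nonneg hβ1 hβ2 k)).symm
    exact (summable_nat_add_iff 2).mp h1
  have hg' : Summable (fun k => |gcoef β (k - 1)|) := by
    apply (summable_nat_add_iff 1).mp
    simpa using hg
  have hb : Summable (fun k => β / 2 * |gcoef β k| + (2 - β) / 2 * |gcoef β (k - 1)|) :=
    (hg.mul_left _).add (hg'.mul_left _)
  refine Summable.of_nonneg_of_le (fun k => abs_nonneg _) (fun k => ?_) hb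
  have hb2 : (0:ℝ) ≤ β / 2 := by linarith
  have hb3 : (0:ℝ) ≤ (2 - β) / 2 := by linarith
  cases k with
  | zero =>
    show |w β 0| ≤ _
    rw [show w β 0 = β / 2 * gcoef β 0 from rfl, abs_mul, abs_of_nonneg hb2]
    have : (0:ℝ) ≤ (2 - β) / 2 * |gcoef β (0 - 1)| := mul_nonneg hb3 (abs_nonneg _)
    simp only [Nat.zero_sub]
    linarith [this]
  | succ k =>
    show |w β (k + 1)| ≤ _
    rw [show w β (k + 1) = β / 2 * gcoef β (k + 1) + (2 - β) / 2 * gcoef β k from rfl]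
    have := abs_add_le (β / 2 * gcoef β (k + 1)) ((2 - β) / 2 * gcoef β k)
    rw [abs_mul, abs_mul, abs_of_nonneg hb2, abs_of_nonneg hb3] at this
    simpa using this

lemma l2OpNorm_le_of_bounds {n : ℕ} (M : Matrix (Fin n) (Fin n) ℝ) {δ : ℝ} (hδ : 0 ≤ δ)
    (hrow : ∀ i, ∑ j, |M i j| ≤ δ) (hcol : ∀ j, ∑ i, |M i j| ≤ δ) :
    l2OpNorm M ≤ δ := by
  refine ContinuousLinearMap.opNorm_le_bound _ hδ fun x => ?_
  set v : Fin n → ℝ := WithLp.equiv 2 (Fin n → ℝ) x with hv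
  have hxv : x = (WithLp.equiv 2 (Fin n → ℝ)).symm v := by simp [hv]
  rw [hxv, WithLp.equiv_symm_apply, Matrix.toEuclideanCLM_toLp]
  rw [EuclideanSpace.norm_eq, EuclideanSpace.norm_eq]
  simp only [PiLp.toLp_apply, Real.norm_eq_abs, sq_abs]
  have key : ∑ i, (M.mulVec v) i ^ 2 ≤ δ ^ 2 * ∑ j, (v j) ^ 2 := by
    have hrow' : ∀ i, (M.mulVec v) i ^ 2 ≤ δ * ∑ j, |M i j| * (v j) ^ 2 := by
      intro i
      have h1 : |(M.mulVec v) i| ≤ ∑ j, |M i j| * |v j| := by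
        rw [Matrix.mulVec, dotProduct]
        refine (Finset.abs_sum_le_sum_abs _ _).trans ?_
        refine Finset.sum_le_sum fun j _ => ?_
        rw [abs_mul]
      have h2 : (∑ j, |M i j| * |v j|) ^ 2
          ≤ (∑ j, |M i j|) * (∑ j, |M i j| * (v j) ^ 2) := by
        have hcs := Finset.sum_mul_sq_le_sq_mul_sq Finset.univ
          (fun j => Real.sqrt |M i j|) (fun j => Real.sqrt |M i j| * |v j|)
        have e1 : ∀ j : Fin n, Real.sqrt |M i j| * (Real.sqrt |M i j| * |v j|)
            = |M i j| * |v j| := fun j => by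
          rw [← mul_assoc, Real.mul_self_sqrt (abs_nonneg _)]
        have e2 : ∀ j : Fin n, Real.sqrt |M i j| ^ 2 = |M i j| := fun j =>
          Real.sq_sqrt (abs_nonneg _)
        have e3 : ∀ j : Fin n, (Real.sqrt |M i j| * |v j|) ^ 2 = |M i j| * (v j) ^ 2 :=
          fun j => by rw [mul_pow, e2, sq_abs]
        simp only [e1, e2, e3] at hcs
        exact hcs
      calc (M.mulVec v) i ^ 2 = |(M.mulVec v) i| ^ 2 := (sq_abs _).symm
        _ ≤ (∑ j, |M i j| * |v j|) ^ 2 := by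
            apply pow_le_pow_left₀ (abs_nonneg _) h1
        _ ≤ (∑ j, |M i j|) * (∑ j, |M i j| * (v j) ^ 2) := h2
        _ ≤ δ * (∑ j, |M i j| * (v j) ^ 2) := by
            refine mul_le_mul_of_nonneg_right (hrow i) ?_
            exact Finset.sum_nonneg fun j _ => mul_nonneg (abs_nonneg _) (sq_nonneg _)
    calc ∑ i, (M.mulVec v) i ^ 2 ≤ ∑ i : Fin n, δ * ∑ j, |M i j| * (v j) ^ 2 :=
          Finset.sum_le_sum fun i _ => hrow' i
      _ = δ * ∑ j, (∑ i, |M i j|) * (v j) ^ 2 := by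
          rw [← Finset.mul_sum, Finset.sum_comm]
          congr 1
          refine Finset.sum_congr rfl fun j _ => ?_
          rw [Finset.sum_mul]
      _ ≤ δ * ∑ j, δ * (v j) ^ 2 := by
          refine mul_le_mul_of_nonneg_left ?_ hδ
          exact Finset.sum_le_sum fun j _ =>
            mul_le_mul_of_nonneg_right (hcol j) (sq_nonneg _)
      _ = δ ^ 2 * ∑ j, (v j) ^ 2 := by rw [← Finset.mul_sum]; ring
  calc Real.sqrt (∑ i, (M.mulVec v) i ^ 2) ≤ Real.sqrt (δ ^ 2 * ∑ j, (v j) ^ 2) :=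
        Real.sqrt_le_sqrt key
    _ = δ * Real.sqrt (∑ j, (v j) ^ 2) := by
        rw [Real.sqrt_mul (sq_nonneg δ), Real.sqrt_sq hδ]

lemma matrank_add_le {m : Type*} [Fintype m] [DecidableEq m] (A B : Matrix m m ℝ) :
    (A + B).rank ≤ A.rank + B.rank := by
  classical
  simp only [Matrix.rank]
  have hle : LinearMap.range (A + B).mulVecLin ≤
      LinearMap.range A.mulVecLin ⊔ LinearMap.range B.mulVecLin := by
    rintro x ⟨v, rfl⟩
    exact Submodule.mem_sup.mpr ⟨A.mulVecLin v, ⟨v, rfl⟩, B.mulVecLin v, ⟨v, rfl⟩,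
      by simp [Matrix.mulVecLin_add]⟩
  calc Module.finrank ℝ (LinearMap.range (A + B).mulVecLin)
      ≤ Module.finrank ℝ ↑(LinearMap.range A.mulVecLin ⊔ LinearMap.range B.mulVecLin) :=
        Submodule.finrank_mono hle
    _ ≤ _ := Submodule.finrank_add_le_finrank_add_finrank _ _

lemma matrank_smul_le {m : Type*} [Fintype m] [DecidableEq m] (c : ℝ) (A : Matrix m m ℝ) :
    (c • A).rank ≤ A.rank := by
  have h : c • A = (c • (1 : Matrix m m ℝ)) * A := by rw [Matrix.smul_mul, one_mul]
  rw [h]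
  exact Matrix.rank_mul_le_right _ _


lemma l2OpNorm_smul_le (c : ℝ) {n : ℕ} (M : Matrix (Fin n) (Fin n) ℝ) :
    l2OpNorm (c • M) ≤ |c| * l2OpNorm M := by
  unfold l2OpNorm
  rw [map_smul]
  simpa using ContinuousLinearMap.opNorm_smul_le c (Matrix.toEuclideanCLM (𝕜 := ℝ) M)

lemma l2OpNorm_add_le {n : ℕ} (A B : Matrix (Fin n) (Fin n) ℝ) :
    l2OpNorm (A + B) ≤ l2OpNorm A + l2OpNorm B := by
  unfold l2OpNorm
  rw [map_add]
  exact norm_add_le _ _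


theorem A0_sub_Psk_split (β α e1 e2 h τ : ℝ) (hβ1 : 1 < β) (hβ2 : β < 2)
    (hα0 : 0 < α) (hα1 : α < 1) (he1 : 0 < e1) (he2 : 0 < e2)
    (hh : 0 < h) (hτ : 0 < τ) :
    ∀ ε > (0 : ℝ), ∃ N' : ℕ, 0 < N' ∧
      ∀ N : ℕ, N' + 1 < N →
        ∃ U V : Matrix (Fin (N - 1)) (Fin (N - 1)) ℝ,
          A0mat β α h τ e1 e2 N - Psk β α h τ e1 e2 N = U + V ∧
          U.rank ≤ 2 * N' ∧ l2OpNorm V ≤ ε := by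
  intro ε hε
  classical
  have hσ0 : (0:ℝ) < 1 - α / 2 := by linarith
  have hσ1 : 1 - α / 2 ≤ 1 := by linarith
  have hc1 : (0:ℝ) < (1 - α / 2) * e1 := mul_pos hσ0 he1
  have hc2 : (0:ℝ) < (1 - α / 2) * e2 := mul_pos hσ0 he2
  have hsum := w_abs_summable hβ1 hβ2
  set δ := ε / (e1 + e2) with hδdef
  have hδ : 0 < δ := div_pos hε (by linarith)
  obtain ⟨s, hs⟩ := summable_iff_vanishing_norm.mp hsum δ hδ
  refine ⟨s.sup id + 1, Nat.succ_pos _, fun N hN => ?_⟩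
  set N' := s.sup id + 1 with hN'def
  have hNge : N' + 2 ≤ N := by omega
  have tail : ∀ t : Finset ℕ, (∀ m ∈ t, N' ≤ m) → ∑ m ∈ t, |w β m| < δ := by
    intro t ht
    have hd : Disjoint t s := by
      rw [Finset.disjoint_left]
      intro m hm hms
      have h1 : id m ≤ s.sup id := Finset.le_sup hms
      have h2 := ht m hm
      simp only [id] at h1
      omega
    have := hs t hd
    rwa [Real.norm_eq_abs,
      abs_of_nonneg (Finset.sum_nonneg fun _ _ => abs_nonneg _)] at this
  set D := skG β N - Gmat β N with hDdef
  set U0 : Matrix (Fin (N-1)) (Fin (N-1)) ℝ :=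
    Matrix.of (fun i j => if N - N' ≤ (j:ℕ) ∨ (i:ℕ) = N - 2 then D i j else 0) with hU0def
  set V0 : Matrix (Fin (N-1)) (Fin (N-1)) ℝ :=
    Matrix.of (fun i j => if N - N' ≤ (j:ℕ) ∨ (i:ℕ) = N - 2 then 0 else D i j) with hV0def
  have Dentry : ∀ i j : Fin (N-1), (i:ℕ) ≠ N - 2 →
      D i j = if (i:ℕ) + 2 ≤ (j:ℕ) then -(w β (N - 1 - ((j:ℕ) - (i:ℕ)) + 1)) else 0 := by
    intro i j hi
    have hi' : (i:ℕ) < N - 1 := i.isLt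
    have hj' : (j:ℕ) < N - 1 := j.isLt
    rw [hDdef]
    simp only [Matrix.sub_apply, skG, Gmat, Matrix.of_apply]
    by_cases h2 : (i:ℕ) + 2 ≤ (j:ℕ)
    · rw [if_pos h2, if_neg (by omega), if_neg (by omega), if_neg (by omega)]
      ring
    · rw [if_neg h2]
      by_cases hji : (j:ℕ) ≤ (i:ℕ)
      · rw [if_pos hji, if_neg (by omega), if_pos (by omega)]
        rw [show (i:ℕ) - (j:ℕ) + 1 = (i:ℕ) + 1 - (j:ℕ) by omega]
        ring
      · have hj1 : (j:ℕ) = (i:ℕ) + 1 := by omega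
        rw [if_neg hji, if_pos (by omega), hj1]
        rw [if_pos (le_refl ((i:ℕ) + 1)), Nat.sub_self]
        ring
  have hU0V0 : D = U0 + V0 := by
    ext i j
    simp only [Matrix.add_apply, hU0def, hV0def, Matrix.of_apply]
    by_cases hc : N - N' ≤ (j:ℕ) ∨ (i:ℕ) = N - 2
    · rw [if_pos hc, if_pos hc, add_zero]
    · rw [if_neg hc, if_neg hc, zero_add]
  refine ⟨((1 - α/2) * e1) • U0 + ((1 - α/2) * e2) • U0ᵀ,
          ((1 - α/2) * e1) • V0 + ((1 - α/2) * e2) • V0ᵀ, ?_, ?_, ?_⟩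
  · -- the decomposition
    have key : A0mat β α h τ e1 e2 N - Psk β α h τ e1 e2 N
        = ((1 - α/2) * e1) • D + ((1 - α/2) * e2) • Dᵀ := by
      ext i j
      simp only [hDdef, A0mat, Psk, Kmat, skK, Matrix.sub_apply, Matrix.add_apply,
        Matrix.smul_apply, Matrix.transpose_apply, smul_eq_mul]
      ring
    rw [key, hU0V0, Matrix.transpose_add, smul_add, smul_add]
    abel
  · -- the rank bound
    set q : Fin (N-1) → ℝ := fun i => if (i:ℕ) = N - 2 then 1 else 0 with hq
    set p : Fin (N-1) → ℝ := fun j => if N - N' ≤ (j:ℕ) then 1 else 0 with hp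
    have hU0eq : U0 = Matrix.diagonal q * D
        + Matrix.diagonal (fun i => 1 - q i) * (D * Matrix.diagonal p) := by
      ext i j
      simp only [Matrix.add_apply, Matrix.diagonal_mul, Matrix.mul_diagonal,
        hU0def, Matrix.of_apply, hq, hp]
      by_cases h1 : (i:ℕ) = N - 2
      · simp [h1]
      · by_cases h2 : N - N' ≤ (j:ℕ) <;> simp [h1, h2]
    have hrq : (Matrix.diagonal q).rank ≤ 1 := by
      rw [Matrix.rank_diagonal]
      refine Fintype.card_le_one_iff.mpr ?_
      rintro ⟨a, ha⟩ ⟨b, hb⟩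
      have ha' : (a:ℕ) = N - 2 := by
        by_contra hcon; exact ha (by simp only [hq]; rw [if_neg hcon])
      have hb' : (b:ℕ) = N - 2 := by
        by_contra hcon; exact hb (by simp only [hq]; rw [if_neg hcon])
      have hab : a = b := Fin.ext (by omega)
      exact Subtype.ext hab
    have hrp : (Matrix.diagonal p).rank ≤ N' - 1 := by
      rw [Matrix.rank_diagonal]
      have hinj : Function.Injective (fun x : {j : Fin (N-1) // p j ≠ 0} =>
          (⟨(x.1 : ℕ) - (N - N'), by
            have hx : N - N' ≤ (x.1 : ℕ) := by
              by_contra hcon; exact x.2 (by simp only [hp]; rw [if_neg hcon])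
            have := x.1.isLt; omega⟩ : Fin (N' - 1))) := by
        rintro ⟨a, ha⟩ ⟨b, hb⟩ hab
        have hxa : N - N' ≤ (a:ℕ) := by
          by_contra hcon; exact ha (by simp only [hp]; rw [if_neg hcon])
        have hxb : N - N' ≤ (b:ℕ) := by
          by_contra hcon; exact hb (by simp only [hp]; rw [if_neg hcon])
        have hab' : (a:ℕ) - (N - N') = (b:ℕ) - (N - N') := by
          have := congrArg Fin.val hab
          simpa using this
        have : a = b := Fin.ext (by omega)
        exact Subtype.ext this
      have := Fintype.card_le_of_injective _ hinj
      simpa using this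
    have hrankU0 : U0.rank ≤ N' := by
      rw [hU0eq]
      calc (Matrix.diagonal q * D
            + Matrix.diagonal (fun i => 1 - q i) * (D * Matrix.diagonal p)).rank
          ≤ (Matrix.diagonal q * D).rank
            + (Matrix.diagonal (fun i => 1 - q i) * (D * Matrix.diagonal p)).rank :=
            matrank_add_le _ _
        _ ≤ (Matrix.diagonal q).rank + (Matrix.diagonal p).rank :=
            add_le_add (Matrix.rank_mul_le_left _ _)
              ((Matrix.rank_mul_le_right _ _).trans (Matrix.rank_mul_le_right _ _))
        _ ≤ 1 + (N' - 1) := add_le_add hrq hrp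
        _ = N' := by omega
    calc (((1 - α/2) * e1) • U0 + ((1 - α/2) * e2) • U0ᵀ).rank
        ≤ (((1 - α/2) * e1) • U0).rank + (((1 - α/2) * e2) • U0ᵀ).rank :=
          matrank_add_le _ _
      _ ≤ U0.rank + U0ᵀ.rank := add_le_add (matrank_smul_le _ _) (matrank_smul_le _ _)
      _ = U0.rank + U0.rank := by rw [Matrix.rank_transpose]
      _ ≤ 2 * N' := by omega
  · -- the norm bound
    have hV0entry : ∀ i j : Fin (N-1), V0 i j ≠ 0 →
        ¬ (N - N' ≤ (j:ℕ)) ∧ (i:ℕ) ≠ N - 2 ∧ (i:ℕ) + 2 ≤ (j:ℕ) ∧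
        |V0 i j| = |w β (N - 1 - ((j:ℕ) - (i:ℕ)) + 1)| ∧
        N' ≤ N - 1 - ((j:ℕ) - (i:ℕ)) + 1 := by
      intro i j hne
      have hval : V0 i j = if N - N' ≤ (j:ℕ) ∨ (i:ℕ) = N - 2 then 0 else D i j := rfl
      by_cases hc : N - N' ≤ (j:ℕ) ∨ (i:ℕ) = N - 2
      · exact absurd (by rw [hval, if_pos hc]) hne
      push_neg at hc
      obtain ⟨hc1', hc2'⟩ := hc
      rw [hval, if_neg (by push_neg; exact ⟨hc1', hc2'⟩)] at hne ⊢
      rw [Dentry i j hc2'] at hne ⊢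
      by_cases h2 : (i:ℕ) + 2 ≤ (j:ℕ)
      · refine ⟨by omega, hc2', h2, ?_, ?_⟩
        · rw [if_pos h2, abs_neg]
        · have hj' : (j:ℕ) < N - 1 := j.isLt
          omega
      · exact absurd (by rw [if_neg h2]) hne
    have rowcol : ∀ (g : Fin (N-1) → ℝ) (f : Fin (N-1) → ℕ),
        (∀ j, g j ≠ 0 → |g j| = |w β (f j)| ∧ N' ≤ f j) →
        (∀ j1 j2, g j1 ≠ 0 → g j2 ≠ 0 → f j1 = f j2 → j1 = j2) →
        ∑ j, |g j| ≤ δ := by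
      intro g f hval hinj
      set S : Finset (Fin (N-1)) := Finset.univ.filter (fun j => g j ≠ 0) with hS
      have h1 : ∑ j, |g j| = ∑ j ∈ S, |g j| := by
        symm
        refine Finset.sum_subset (Finset.subset_univ _) ?_
        intro x _ hx
        have hgx : g x = 0 := by
          by_contra hgx
          exact hx (by rw [hS, Finset.mem_filter]; exact ⟨Finset.mem_univ x, hgx⟩)
        rw [hgx, abs_zero]
      have hmem : ∀ x ∈ S, g x ≠ 0 := fun x hx => (Finset.mem_filter.mp hx).2
      have h2 : ∑ j ∈ S, |g j| = ∑ m ∈ S.image f, |w β m| := by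
        rw [Finset.sum_image (fun x hx y hy hxy => hinj x y (hmem x hx) (hmem y hy) hxy)]
        exact Finset.sum_congr rfl fun j hj => (hval j (hmem j hj)).1
      rw [h1, h2]
      refine (tail _ fun m hm => ?_).le
      obtain ⟨j, hj, rfl⟩ := Finset.mem_image.mp hm
      exact (hval j (hmem j hj)).2
    have hrow : ∀ i : Fin (N-1), ∑ j, |V0 i j| ≤ δ := by
      intro i
      refine rowcol (fun j => V0 i j) (fun j => N - 1 - ((j:ℕ) - (i:ℕ)) + 1)
        (fun j hj => ⟨(hV0entry i j hj).2.2.2.1, (hV0entry i j hj).2.2.2.2⟩) ?_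
      intro j1 j2 h1 h2 hf
      have hf' : N - 1 - ((j1:ℕ) - (i:ℕ)) + 1 = N - 1 - ((j2:ℕ) - (i:ℕ)) + 1 := hf
      have e1' := hV0entry i j1 h1
      have e2' := hV0entry i j2 h2
      have hj1 : (j1:ℕ) < N - 1 := j1.isLt
      have hj2 : (j2:ℕ) < N - 1 := j2.isLt
      have hA := e1'.2.2.1
      have hB := e2'.2.2.1
      have hA2 := e1'.1
      have hB2 := e2'.1
      exact Fin.ext (by omega)
    have hcol : ∀ j : Fin (N-1), ∑ i, |V0 i j| ≤ δ := by
      intro j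
      refine rowcol (fun i => V0 i j) (fun i => N - 1 - ((j:ℕ) - (i:ℕ)) + 1)
        (fun i hi => ⟨(hV0entry i j hi).2.2.2.1, (hV0entry i j hi).2.2.2.2⟩) ?_
      intro i1 i2 h1 h2 hf
      have hf' : N - 1 - ((j:ℕ) - (i1:ℕ)) + 1 = N - 1 - ((j:ℕ) - (i2:ℕ)) + 1 := hf
      have e1' := hV0entry i1 j h1
      have e2' := hV0entry i2 j h2
      have hj' : (j:ℕ) < N - 1 := j.isLt
      have hA := e1'.2.2.1
      have hB := e2'.2.2.1
      exact Fin.ext (by omega)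
    have hn1 : l2OpNorm V0 ≤ δ := l2OpNorm_le_of_bounds _ hδ.le hrow hcol
    have hn2 : l2OpNorm V0ᵀ ≤ δ := by
      refine l2OpNorm_le_of_bounds _ hδ.le (fun i => ?_) (fun j => ?_)
      · simpa [Matrix.transpose_apply] using hcol i
      · simpa [Matrix.transpose_apply] using hrow j
    have htri : l2OpNorm (((1 - α/2) * e1) • V0 + ((1 - α/2) * e2) • V0ᵀ)
        ≤ ((1 - α/2) * e1) * l2OpNorm V0 + ((1 - α/2) * e2) * l2OpNorm V0ᵀ := by
      calc l2OpNorm (((1 - α/2) * e1) • V0 + ((1 - α/2) * e2) • V0ᵀ)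
          ≤ l2OpNorm (((1 - α/2) * e1) • V0) + l2OpNorm (((1 - α/2) * e2) • V0ᵀ) :=
            l2OpNorm_add_le _ _
        _ ≤ |(1 - α/2) * e1| * l2OpNorm V0 + |(1 - α/2) * e2| * l2OpNorm V0ᵀ :=
            add_le_add (l2OpNorm_smul_le _ _) (l2OpNorm_smul_le _ _)
        _ = ((1 - α/2) * e1) * l2OpNorm V0 + ((1 - α/2) * e2) * l2OpNorm V0ᵀ := by
            rw [abs_of_pos hc1, abs_of_pos hc2]
    refine htri.trans ?_
    have hb1 : ((1 - α/2) * e1) * l2OpNorm V0 ≤ e1 * δ := by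
      have h0 : 0 ≤ l2OpNorm V0 := norm_nonneg _
      calc ((1 - α/2) * e1) * l2OpNorm V0 ≤ ((1 - α/2) * e1) * δ :=
            mul_le_mul_of_nonneg_left hn1 hc1.le
        _ ≤ e1 * δ := by nlinarith [mul_pos (mul_pos he1 hδ) hα0]
    have hb2 : ((1 - α/2) * e2) * l2OpNorm V0ᵀ ≤ e2 * δ := by
      have h0 : 0 ≤ l2OpNorm V0ᵀ := norm_nonneg _
      calc ((1 - α/2) * e2) * l2OpNorm V0ᵀ ≤ ((1 - α/2) * e2) * δ :=
            mul_le_mul_of_nonneg_left hn2 hc2.le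
        _ ≤ e2 * δ := by nlinarith [mul_pos (mul_pos he2 hδ) hα0]
    calc ((1 - α/2) * e1) * l2OpNorm V0 + ((1 - α/2) * e2) * l2OpNorm V0ᵀ
        ≤ e1 * δ + e2 * δ := add_le_add hb1 hb2
      _ = ε := by
          rw [hδdef]
          field_simp
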